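/- Let A be a commutative monoid and p a prime number. Let F_p : ℤ[A] → ℤ[A] be the ring endomorphism of the monoid algebra ℤ[A] induced by the monoid endomorphism a ↦ a^p (extending linearly on the canonical basis). Then F_p is a Frobenius lift: for every x ∈ ℤ[A], the image of F_p(x) under the coefficient reduction map ℤ[A] → (ℤ/pℤ)[A] equals the p-th power of the image of x. (This is the Λ-structure underlying the fact that every toric variety is a Λ-scheme.) -/

import Mathlib

/-- The reduction map `ℤ[A] → (ℤ/pℤ)[A]` induced on coefficients by the ring
homomorphism `ℤ → ℤ/pℤ`. -/
noncomputable def reduceCoeffs (p : ℕ) {A : Type*} (x : MonoidAlgebra ℤ A) :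
    MonoidAlgebra (ZMod p) A :=
  MonoidAlgebra.ofCoeff (Finsupp.mapRange (fun z : ℤ => (z : ZMod p)) (by simp) x.coeff)

theorem reduceCoeffs_add (p : ℕ) {A : Type*} (x y : MonoidAlgebra ℤ A) :
    reduceCoeffs p (x + y) = reduceCoeffs p x + reduceCoeffs p y :=
  by ext b; simp [reduceCoeffs]

theorem reduceCoeffs_single (p : ℕ) {A : Type*} (a : A) (c : ℤ) :
    reduceCoeffs p (MonoidAlgebra.single a c) = MonoidAlgebra.single a (c : ZMod p) := by
  unfold reduceCoeffs
  ext b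
  simp [MonoidAlgebra.single_apply, Finsupp.single_apply, apply_ite (fun z : ℤ => (z : ZMod p))]

/-- The Λ-structure on a monoid algebra (underlying the Λ-structure of toric
varieties): for a commutative monoid `A` and a prime `p`, the ring
endomorphism `F_p` of `ℤ[A]` induced by `a ↦ a^p` is a Frobenius lift, i.e.
reducing `F_p x` modulo `p` yields the `p`-th power of the reduction of `x`
in `(ℤ/pℤ)[A]`. -/
theorem monoidAlgebra_frobenius_lift
    {A : Type*} [CommMonoid A] (p : ℕ) (hp : p.Prime) (x : MonoidAlgebra ℤ A) :
    reduceCoeffs p (MonoidAlgebra.mapDomainRingHom ℤ (powMonoidHom p) x)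
      = (reduceCoeffs p x) ^ p := by
  haveI : Fact p.Prime := ⟨hp⟩
  haveI : CharP (MonoidAlgebra (ZMod p) A) p := by
    have hinj : Function.Injective (algebraMap (ZMod p) (MonoidAlgebra (ZMod p) A)) := by
      intro a b h
      have := congrArg (fun f : MonoidAlgebra (ZMod p) A => f.coeff 1) h
      simpa [MonoidAlgebra.coe_algebraMap] using this
    exact charP_of_injective_algebraMap hinj p
  have key : ∀ y : MonoidAlgebra ℤ A,
      (reduceCoeffs p y) ^ p = frobenius (MonoidAlgebra (ZMod p) A) p (reduceCoeffs p y) := by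
    intro y; rfl
  rw [key]
  induction x using MonoidAlgebra.induction with
  | zero => simp [reduceCoeffs]
  | single_add a c f _ _ ih =>
    rw [map_add, reduceCoeffs_add, reduceCoeffs_add, map_add, ih]
    congr 1
    show reduceCoeffs p (MonoidAlgebra.mapDomain (powMonoidHom p) (MonoidAlgebra.single a c)) = _
    rw [MonoidAlgebra.mapDomain_single, reduceCoeffs_single, reduceCoeffs_single]
    show _ = MonoidAlgebra.single a ((c : ZMod p)) ^ p
    rw [MonoidAlgebra.single_pow, ZMod.pow_card]
    rfl
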